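/- For every 1 ≤ ℓ ≤ m ≤ n, the variance of V_ℓ satisfies σ_ℓ² := E[V_ℓ²] ≤ B^ℓ C(n, ℓ) C(n−ℓ, m−ℓ)². -/

import Mathlib

open MeasureTheory ProbabilityTheory Filter Topology

noncomputable section

/-- `φ_a(x) := p_a⁻¹ 1{x = a} - 1`. -/
def phi {A : Type*} [DecidableEq A] (p : A → ℝ) (a x : A) : ℝ :=
  (p a)⁻¹ * (if x = a then 1 else 0) - 1

/-- Extend a (1-indexed) sequence `β_1 < ⋯ < β_ℓ` of positions in `{1,…,n}` by the
conventions `β_0 = 0` and `β_{ℓ+1} = n+1`.  Here `β : Fin ℓ → ℕ` lists `β_1,…,β_ℓ`. -/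
def extSeq (n ℓ : ℕ) (β : Fin ℓ → ℕ) (k : Fin (ℓ + 2)) : ℕ :=
  if h0 : (k : ℕ) = 0 then 0
  else if h1 : (k : ℕ) = ℓ + 1 then n + 1
  else β ⟨(k : ℕ) - 1, by have hk := k.isLt; omega⟩

/-- The combinatorial coefficient
`c(β,γ) = ∏_{k=1}^{ℓ+1} C(β_k - β_{k-1} - 1, γ_k - γ_{k-1} - 1)`,
with `β_0 = γ_0 = 0`, `β_{ℓ+1} = n+1`, `γ_{ℓ+1} = m+1`.  The subsets
`β ⊆ {1,…,n}` and `γ ⊆ {1,…,m}` are encoded by strictly increasing maps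
`Fin ℓ → Fin n` and `Fin ℓ → Fin m` (0-indexed, whence the `+ 1`'s). -/
def gapCoeff (n m ℓ : ℕ) (β : Fin ℓ → Fin n) (γ : Fin ℓ → Fin m) : ℕ :=
  ∏ k : Fin (ℓ + 1),
    Nat.choose
      (extSeq n ℓ (fun i => (β i : ℕ) + 1) k.succ
        - extSeq n ℓ (fun i => (β i : ℕ) + 1) k.castSucc - 1)
      (extSeq m ℓ (fun i => (γ i : ℕ) + 1) k.succ
        - extSeq m ℓ (fun i => (γ i : ℕ) + 1) k.castSucc - 1)

/-- The random variable `V_ℓ = Σ_β Σ_γ c(β,γ) ∏_{k=1}^ℓ φ_{w_{γ_k}}(ξ_{β_k})`,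
where `β`, `γ` run over strictly increasing maps (i.e. `ℓ`-subsets). -/
def Vell {A : Type*} {Ω : Type*} [DecidableEq A] (p : A → ℝ) (n m : ℕ)
    (w : Fin m → A) (ξ : ℕ → Ω → A) (ℓ : ℕ) (ω : Ω) : ℝ :=
  ∑ β ∈ Finset.univ.filter (fun β : Fin ℓ → Fin n => ∀ i j : Fin ℓ, i < j → β i < β j),
    ∑ γ ∈ Finset.univ.filter (fun γ : Fin ℓ → Fin m => ∀ i j : Fin ℓ, i < j → γ i < γ j),
      (gapCoeff n m ℓ β γ : ℝ) * ∏ k : Fin ℓ, phi p (w (γ k)) (ξ (β k : ℕ) ω)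


section AuxComb
open Finset


lemma sum_antidiagonalTuple_succ {r t : ℕ} (F : (Fin (r+1) → ℕ) → ℕ) :
    ∑ h ∈ Finset.Nat.antidiagonalTuple (r+1) t, F h
      = ∑ x ∈ (Finset.HasAntidiagonal.antidiagonal t).sigma
          (fun ab : ℕ × ℕ => Finset.Nat.antidiagonalTuple r ab.2),
          F (Fin.cons x.1.1 x.2) := by
  refine (Finset.sum_nbij' (fun y => ⟨(y 0, ∑ i : Fin r, y i.succ), Fin.tail y⟩)
    (fun x => Fin.cons x.1.1 x.2) ?_ ?_ ?_ ?_ ?_)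
  · intro y hy
    rw [Finset.Nat.mem_antidiagonalTuple] at hy
    simp only [Finset.mem_sigma, Finset.HasAntidiagonal.mem_antidiagonal, Finset.Nat.mem_antidiagonalTuple]
    exact ⟨by rw [← hy, Fin.sum_univ_succ], rfl⟩
  · intro x hx
    rw [Finset.mem_sigma, Finset.HasAntidiagonal.mem_antidiagonal, Finset.Nat.mem_antidiagonalTuple] at hx
    rw [Finset.Nat.mem_antidiagonalTuple, Fin.sum_univ_succ]
    simp [hx.2, hx.1]
  · intro y _; simp [Fin.cons_self_tail]
  · intro x hx
    rw [Finset.mem_sigma, Finset.HasAntidiagonal.mem_antidiagonal, Finset.Nat.mem_antidiagonalTuple] at hx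
    refine Sigma.ext ?_ (by simp [Fin.tail_cons])
    simp [hx.2]
  · intro y _; simp [Fin.cons_self_tail]

/-- Multi-Vandermonde. -/
lemma vandermonde_tuple (r t : ℕ) (g : Fin r → ℕ) :
    ∑ h ∈ Finset.Nat.antidiagonalTuple r t, ∏ i, (g i).choose (h i)
      = (∑ i, g i).choose t := by
  induction r generalizing t with
  | zero =>
    cases t with
    | zero => simp
    | succ t => simp
  | succ r ih =>
    rw [sum_antidiagonalTuple_succ (fun h => ∏ i, (g i).choose (h i)), Finset.sum_sigma]
    have : ∀ ab ∈ Finset.HasAntidiagonal.antidiagonal t,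
        ∑ h ∈ Finset.Nat.antidiagonalTuple r ab.2,
          ∏ i : Fin (r+1), (g i).choose ((Fin.cons ab.1 h : Fin (r+1) → ℕ) i)
        = (g 0).choose ab.1 * (∑ i : Fin r, g i.succ).choose ab.2 := by
      intro ab _
      rw [← ih ab.2, Finset.mul_sum]
      refine Finset.sum_congr rfl fun h _ => ?_
      rw [Fin.prod_univ_succ]
      simp
    rw [Finset.sum_congr rfl this, Fin.sum_univ_succ, Nat.add_choose_eq]

lemma fin_grow (r : ℕ) (a : Fin (r+1) → ℕ) (h : ∀ k : Fin r, a k.castSucc + 1 ≤ a k.succ) :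
    ∀ k : Fin (r+1), a 0 + (k : ℕ) ≤ a k := by
  intro k
  induction k using Fin.induction with
  | zero => simp
  | succ i ih =>
    have := h i
    simp only [Fin.val_succ, Fin.coe_castSucc] at *
    omega

lemma tele (r : ℕ) (a : Fin (r+1) → ℕ) (h : ∀ k : Fin r, a k.castSucc + 1 ≤ a k.succ) :
    ∑ k : Fin r, (a k.succ - a k.castSucc - 1) = a (Fin.last r) - a 0 - r := by
  induction r with
  | zero => simp
  | succ r ih =>
    have hb : ∀ k : Fin r, (a ∘ Fin.castSucc) k.castSucc + 1 ≤ (a ∘ Fin.castSucc) k.succ := by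
      intro k
      have := h k.castSucc; rw [Fin.succ_castSucc] at this; exact this
    have IH := ih (a ∘ Fin.castSucc) hb
    simp only [Function.comp] at IH
    have hterm : ∀ k : Fin r,
        a (k.castSucc).succ - a (k.castSucc).castSucc - 1
          = a (Fin.castSucc k.succ) - a (Fin.castSucc k.castSucc) - 1 := by
      intro k; rw [Fin.succ_castSucc]
    rw [Fin.sum_univ_castSucc, Finset.sum_congr rfl (fun k _ => hterm k), IH]
    have hg : a (Fin.castSucc 0) + r ≤ a (Fin.castSucc (Fin.last r)) := by
      simpa using fin_grow _ (a ∘ Fin.castSucc) hb (Fin.last r)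
    have hlast : a (Fin.castSucc (Fin.last r)) + 1 ≤ a ((Fin.last r).succ) := h (Fin.last r)
    have e0 : (Fin.castSucc (0 : Fin (r+1))) = (0 : Fin (r+2)) := rfl
    have e1 : ((Fin.last r).succ) = Fin.last (r+1) := rfl
    rw [e0] at IH hg ⊢
    rw [e1] at hlast ⊢
    omega

lemma extSeq_zero {m ℓ : ℕ} (f : Fin ℓ → ℕ) : extSeq m ℓ f 0 = 0 := by simp [extSeq]

lemma extSeq_last {m ℓ : ℕ} (f : Fin ℓ → ℕ) : extSeq m ℓ f (Fin.last (ℓ+1)) = m + 1 := by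
  simp [extSeq]

lemma extSeq_mid {m ℓ : ℕ} (f : Fin ℓ → ℕ) (j : Fin ℓ) (h : j.val + 1 < ℓ + 2) :
    extSeq m ℓ f ⟨j.val + 1, h⟩ = f j := by
  have := j.isLt
  rw [extSeq, dif_neg (by simp), dif_neg (by simp; omega)]
  simp only [Nat.add_sub_cancel, Fin.eta]


lemma extSeq_step {m ℓ : ℕ} (γ : Fin ℓ → Fin m)
    (hmono : ∀ i j : Fin ℓ, i < j → γ i < γ j) (k : Fin (ℓ+1)) :
    extSeq m ℓ (fun i => (γ i : ℕ) + 1) k.castSucc + 1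
      ≤ extSeq m ℓ (fun i => (γ i : ℕ) + 1) k.succ := by
  have hk := k.isLt
  simp only [extSeq, Fin.coe_castSucc, Fin.val_succ]
  split_ifs with h0 h1 h2 h3 h4 <;> try omega
  all_goals try exact False.elim (by assumption)
  exact Nat.succ_le_succ (Nat.succ_le_of_lt
    (Fin.lt_def.mp (hmono _ _ (Fin.mk_lt_mk.mpr (by omega)))))

lemma sum_gaps {m ℓ : ℕ} (γ : Fin ℓ → Fin m)
    (hmono : ∀ i j : Fin ℓ, i < j → γ i < γ j) :
    ∑ k : Fin (ℓ+1), (extSeq m ℓ (fun i => (γ i : ℕ) + 1) k.succ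
      - extSeq m ℓ (fun i => (γ i : ℕ) + 1) k.castSucc - 1) = m - ℓ := by
  rw [tele (ℓ+1) _ (extSeq_step γ hmono), extSeq_last, extSeq_zero]
  omega

lemma eseq_inj {m ℓ : ℕ} (γ γ' : Fin ℓ → Fin m)
    (hmono : ∀ i j : Fin ℓ, i < j → γ i < γ j)
    (hmono' : ∀ i j : Fin ℓ, i < j → γ' i < γ' j)
    (hΦ : ∀ k : Fin (ℓ+1),
      extSeq m ℓ (fun i => (γ i : ℕ) + 1) k.succ
        - extSeq m ℓ (fun i => (γ i : ℕ) + 1) k.castSucc - 1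
      = extSeq m ℓ (fun i => (γ' i : ℕ) + 1) k.succ
        - extSeq m ℓ (fun i => (γ' i : ℕ) + 1) k.castSucc - 1) : γ = γ' := by
  have hE : ∀ k : Fin (ℓ+2),
      extSeq m ℓ (fun i => (γ i : ℕ) + 1) k = extSeq m ℓ (fun i => (γ' i : ℕ) + 1) k := by
    intro k
    induction k using Fin.induction with
    | zero => rw [extSeq_zero, extSeq_zero]
    | succ i ih =>
      have s1 := extSeq_step γ hmono i
      have s2 := extSeq_step γ' hmono' i
      have h := hΦ i
      omega
  funext j
  have := hE ⟨j.val + 1, by have := j.isLt; omega⟩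
  rw [extSeq_mid, extSeq_mid] at this
  exact Fin.ext (by omega)

lemma sum_gapCoeff_le (n m ℓ : ℕ) (hlm : ℓ ≤ m) (hmn : m ≤ n) (β : Fin ℓ → Fin n)
    (hβ : ∀ i j : Fin ℓ, i < j → β i < β j) :
    ∑ γ ∈ Finset.univ.filter (fun γ : Fin ℓ → Fin m => ∀ i j : Fin ℓ, i < j → γ i < γ j),
      gapCoeff n m ℓ β γ ≤ (n - ℓ).choose (m - ℓ) := by
  set g : Fin (ℓ+1) → ℕ := fun k =>
    extSeq n ℓ (fun i => (β i : ℕ) + 1) k.succ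
      - extSeq n ℓ (fun i => (β i : ℕ) + 1) k.castSucc - 1 with hgdef
  set Φ : (Fin ℓ → Fin m) → (Fin (ℓ+1) → ℕ) := fun γ k =>
    extSeq m ℓ (fun i => (γ i : ℕ) + 1) k.succ
      - extSeq m ℓ (fun i => (γ i : ℕ) + 1) k.castSucc - 1 with hΦdef
  have hg : ∑ k, g k = n - ℓ := sum_gaps β hβ
  have hterm : ∀ γ, gapCoeff n m ℓ β γ = ∏ k, (g k).choose (Φ γ k) := fun γ => rfl
  calc ∑ γ ∈ Finset.univ.filter (fun γ : Fin ℓ → Fin m => ∀ i j : Fin ℓ, i < j → γ i < γ j),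
        gapCoeff n m ℓ β γ
      = ∑ h ∈ (Finset.univ.filter
          (fun γ : Fin ℓ → Fin m => ∀ i j : Fin ℓ, i < j → γ i < γ j)).image Φ,
          ∏ k, (g k).choose (h k) := by
        rw [Finset.sum_image]
        · exact Finset.sum_congr rfl fun γ _ => hterm γ
        · intro γ h1 γ' h2 hE
          simp only [Finset.mem_coe, Finset.mem_filter] at h1 h2
          exact eseq_inj γ γ' h1.2 h2.2 (fun k => congrFun hE k)
    _ ≤ ∑ h ∈ Finset.Nat.antidiagonalTuple (ℓ+1) (m-ℓ), ∏ k, (g k).choose (h k) := by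
        refine Finset.sum_le_sum_of_subset ?_
        intro h hh
        rw [Finset.mem_image] at hh
        obtain ⟨γ, hγ, rfl⟩ := hh
        rw [Finset.mem_filter] at hγ
        rw [Finset.Nat.mem_antidiagonalTuple]
        exact sum_gaps γ hγ.2
    _ = (n - ℓ).choose (m - ℓ) := by rw [vandermonde_tuple, hg]

lemma card_strictMono_le (n ℓ : ℕ) :
    ((Finset.univ : Finset (Fin ℓ → Fin n)).filter
      (fun β => ∀ i j : Fin ℓ, i < j → β i < β j)).card ≤ n.choose ℓ := by
  have key : ∀ β ∈ (Finset.univ : Finset (Fin ℓ → Fin n)).filter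
      (fun β => ∀ i j : Fin ℓ, i < j → β i < β j),
      (Finset.image β Finset.univ) ∈ Finset.powersetCard ℓ (Finset.univ : Finset (Fin n)) := by
    intro β hβ
    rw [Finset.mem_filter] at hβ
    have hsm : StrictMono β := fun i j hij => hβ.2 i j hij
    rw [Finset.mem_powersetCard]
    refine ⟨Finset.subset_univ _, ?_⟩
    rw [Finset.card_image_of_injective _ hsm.injective, Finset.card_univ, Fintype.card_fin]
  have hinj : ∀ β ∈ (Finset.univ : Finset (Fin ℓ → Fin n)).filter
      (fun β => ∀ i j : Fin ℓ, i < j → β i < β j),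
      ∀ β' ∈ (Finset.univ : Finset (Fin ℓ → Fin n)).filter
      (fun β => ∀ i j : Fin ℓ, i < j → β i < β j),
      Finset.image β Finset.univ = Finset.image β' Finset.univ → β = β' := by
    intro β hβ β' hβ' him
    rw [Finset.mem_filter] at hβ hβ'
    have hsm : StrictMono β := fun i j hij => hβ.2 i j hij
    have hsm' : StrictMono β' := fun i j hij => hβ'.2 i j hij
    have hcard : (Finset.image β Finset.univ).card = ℓ := by
      rw [Finset.card_image_of_injective _ hsm.injective, Finset.card_univ, Fintype.card_fin]
    have h1 := Finset.orderEmbOfFin_unique hcard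
      (fun x => Finset.mem_image_of_mem β (Finset.mem_univ x)) hsm
    have h2 := Finset.orderEmbOfFin_unique hcard
      (fun x => him ▸ Finset.mem_image_of_mem β' (Finset.mem_univ x)) hsm'
    exact h1.trans h2.symm
  calc ((Finset.univ : Finset (Fin ℓ → Fin n)).filter
        (fun β => ∀ i j : Fin ℓ, i < j → β i < β j)).card
      ≤ (Finset.powersetCard ℓ (Finset.univ : Finset (Fin n))).card :=
        Finset.card_le_card_of_injOn _ key hinj
    _ = n.choose ℓ := by rw [Finset.card_powersetCard, Finset.card_univ, Fintype.card_fin]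


lemma strictMono_eq_of_image_eq {n ℓ : ℕ} {β β' : Fin ℓ → Fin n}
    (hsm : StrictMono β) (hsm' : StrictMono β')
    (him : Finset.image β Finset.univ = Finset.image β' Finset.univ) : β = β' := by
  have hcard : (Finset.image β Finset.univ).card = ℓ := by
    rw [Finset.card_image_of_injective _ hsm.injective, Finset.card_univ, Fintype.card_fin]
  have h1 := Finset.orderEmbOfFin_unique hcard
    (fun x => Finset.mem_image_of_mem β (Finset.mem_univ x)) hsm
  have h2 := Finset.orderEmbOfFin_unique hcard
    (fun x => him ▸ Finset.mem_image_of_mem β' (Finset.mem_univ x)) hsm'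
  exact h1.trans h2.symm

end AuxComb

section AuxProb
open MeasureTheory ProbabilityTheory Finset
section Prob
variable {A : Type*} [Fintype A] [DecidableEq A] [Nonempty A]
  [MeasurableSpace A] [MeasurableSingletonClass A]
  {Ω : Type*} [MeasurableSpace Ω] {μ : Measure Ω} [IsProbabilityMeasure μ]
  {ξ : ℕ → Ω → A} {p : A → ℝ}

lemma comp_eq_sum_indicator (i : ℕ) (f : A → ℝ) (ω : Ω) :
    f (ξ i ω) = ∑ a, Set.indicator {ω' | ξ i ω' = a} (fun _ => f a) ω := by
  have : ∀ a : A, Set.indicator {ω' | ξ i ω' = a} (fun _ => f a) ω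
      = if ξ i ω = a then f a else 0 := by
    intro a
    by_cases h : ξ i ω = a <;> simp [Set.indicator, h]
  rw [Finset.sum_congr rfl fun a _ => this a]
  simp

lemma integral_comp (hmeas : ∀ i, Measurable (ξ i)) (hp : ∀ a, 0 < p a)
    (hdist : ∀ i a, μ {ω | ξ i ω = a} = ENNReal.ofReal (p a)) (i : ℕ) (f : A → ℝ) :
    ∫ ω, f (ξ i ω) ∂μ = ∑ a, f a * p a := by
  have hms : ∀ a : A, MeasurableSet {ω' | ξ i ω' = a} := fun a =>
    (hmeas i) (measurableSet_singleton a)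
  rw [integral_congr_ae (ae_of_all _ (comp_eq_sum_indicator i f)),
    integral_finset_sum _ (fun a _ => (integrable_const (f a)).indicator (hms a))]
  refine Finset.sum_congr rfl fun a _ => ?_
  rw [integral_indicator_const _ (hms a), measureReal_def, hdist, ENNReal.toReal_ofReal (hp a).le,
    smul_eq_mul, mul_comm]

lemma integrable_comp (hmeas : ∀ i, Measurable (ξ i)) (i : ℕ) (f : A → ℝ) :
    Integrable (fun ω => f (ξ i ω)) μ := by
  have hms : ∀ a : A, MeasurableSet {ω' | ξ i ω' = a} := fun a =>
    (hmeas i) (measurableSet_singleton a)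
  have : (fun ω => f (ξ i ω))
      = fun ω => ∑ a, Set.indicator {ω' | ξ i ω' = a} (fun _ => f a) ω :=
    funext (comp_eq_sum_indicator i f)
  rw [this]
  exact integrable_finset_sum _ (fun a _ => (integrable_const (f a)).indicator (hms a))

lemma integrable_prod_comp (hmeas : ∀ i, Measurable (ξ i)) (s : Finset ℕ) (f : ℕ → A → ℝ) :
    Integrable (fun ω => ∏ i ∈ s, f i (ξ i ω)) μ := by
  have hmp : Measurable (fun ω => ∏ i ∈ s, f i (ξ i ω)) :=
    Finset.measurable_prod s (fun i _ => (measurable_of_countable (f i)).comp (hmeas i))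
  refine Integrable.mono' (integrable_const
    (∏ i ∈ s, Finset.univ.sup' Finset.univ_nonempty (fun a => |f i a|)))
    hmp.aestronglyMeasurable (ae_of_all _ fun ω => ?_)
  rw [Real.norm_eq_abs, Finset.abs_prod]
  exact Finset.prod_le_prod (fun i _ => abs_nonneg _)
    (fun i _ => Finset.le_sup' (fun a => |f i a|) (Finset.mem_univ (ξ i ω)))

lemma integral_prod_comp (hmeas : ∀ i, Measurable (ξ i))
    (hindep : iIndepFun ξ μ) (s : Finset ℕ) (f : ℕ → A → ℝ) :
    ∫ ω, ∏ i ∈ s, f i (ξ i ω) ∂μ = ∏ i ∈ s, ∫ ω, f i (ξ i ω) ∂μ := by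
  classical
  induction s using Finset.induction_on with
  | empty => simp
  | insert a s ha ih =>
    have hcomp : iIndepFun (fun i => f i ∘ ξ i) μ :=
      hindep.comp f (fun i => measurable_of_countable (f i))
    have hIF : IndepFun (f a ∘ ξ a) (∏ j ∈ s, (f j ∘ ξ j)) μ :=
      (hcomp.indepFun_finsetProd_of_notMem
        (fun i => (measurable_of_countable (f i)).comp (hmeas i)) ha).symm
    have hfun : ∀ ω, ∏ i ∈ insert a s, f i (ξ i ω)
        = (f a ∘ ξ a) ω * (∏ j ∈ s, (f j ∘ ξ j)) ω := by
      intro ω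
      rw [Finset.prod_insert ha, Finset.prod_apply]
      rfl
    have hPeq : (∏ j ∈ s, (f j ∘ ξ j)) = fun ω => ∏ j ∈ s, f j (ξ j ω) := by
      funext ω; rw [Finset.prod_apply]; rfl
    have hint2 : Integrable (∏ j ∈ s, (f j ∘ ξ j)) μ := by
      rw [hPeq]; exact integrable_prod_comp hmeas s f
    have hmul := hIF.integral_mul_eq_mul_integral (integrable_comp hmeas a (f a)).aestronglyMeasurable
      hint2.aestronglyMeasurable
    rw [integral_congr_ae (ae_of_all _ hfun),
      show (fun ω => (f a ∘ ξ a) ω * (∏ j ∈ s, (f j ∘ ξ j)) ω)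
        = ((f a ∘ ξ a) * ∏ j ∈ s, (f j ∘ ξ j)) from rfl,
      hmul, hPeq, ih, Finset.prod_insert ha]
    rfl

lemma integral_phi (hmeas : ∀ i, Measurable (ξ i)) (hp : ∀ a, 0 < p a)
    (hsum : ∑ a, p a = 1)
    (hdist : ∀ i a, μ {ω | ξ i ω = a} = ENNReal.ofReal (p a)) (i : ℕ) (a : A) :
    ∫ ω, phi p a (ξ i ω) ∂μ = 0 := by
  rw [integral_comp hmeas hp hdist i (phi p a)]
  simp only [phi, sub_mul, one_mul, Finset.sum_sub_distrib, hsum, mul_assoc]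
  rw [Finset.sum_eq_single a]
  · simp [inv_mul_cancel₀ (hp a).ne']
  · intro b _ hb; simp [hb]
  · simp

lemma integral_phi_mul (hmeas : ∀ i, Measurable (ξ i)) (hp : ∀ a, 0 < p a)
    (hsum : ∑ a, p a = 1)
    (hdist : ∀ i a, μ {ω | ξ i ω = a} = ENNReal.ofReal (p a)) (i : ℕ) (a b : A) :
    ∫ ω, phi p a (ξ i ω) * phi p b (ξ i ω) ∂μ
      = (if a = b then (p a)⁻¹ else 0) - 1 := by
  rw [show (fun ω => phi p a (ξ i ω) * phi p b (ξ i ω))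
      = fun ω => (fun x => phi p a x * phi p b x) (ξ i ω) from rfl,
    integral_comp hmeas hp hdist i (fun x => phi p a x * phi p b x)]
  have expand : ∀ x : A, (phi p a x * phi p b x) * p x
      = (p a)⁻¹ * (p b)⁻¹ * ((if x = a then 1 else 0) * (if x = b then 1 else 0) * p x)
        - (p a)⁻¹ * ((if x = a then 1 else 0) * p x)
        - (p b)⁻¹ * ((if x = b then 1 else 0) * p x) + p x := by
    intro x; simp only [phi]; ring
  rw [Finset.sum_congr rfl fun x _ => expand x]
  simp only [Finset.sum_add_distrib, Finset.sum_sub_distrib, ← Finset.mul_sum, hsum]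
  have h1 : ∑ x, (if x = a then (1:ℝ) else 0) * p x = p a := by
    rw [Finset.sum_eq_single a] <;> simp +contextual
  have h2 : ∑ x, (if x = b then (1:ℝ) else 0) * p x = p b := by
    rw [Finset.sum_eq_single b] <;> simp +contextual
  have h3 : ∑ x, (if x = a then (1:ℝ) else 0) * (if x = b then 1 else 0) * p x
      = if a = b then p a else 0 := by
    rw [Finset.sum_eq_single a]
    · by_cases h : a = b <;> simp [h]
    · intro c _ hc; simp [hc]
    · simp
  rw [h1, h2, h3, inv_mul_cancel₀ (hp a).ne', inv_mul_cancel₀ (hp b).ne']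
  by_cases h : a = b
  · subst h
    rw [if_pos rfl, if_pos rfl, inv_mul_cancel_right₀ (hp a).ne']
    ring
  · simp [h]


lemma integral_FF (hmeas : ∀ i, Measurable (ξ i)) (hp : ∀ a, 0 < p a)
    (hsum : ∑ a, p a = 1)
    (hindep : iIndepFun ξ μ)
    (hdist : ∀ i a, μ {ω | ξ i ω = a} = ENNReal.ofReal (p a))
    (n m ℓ : ℕ) (w : Fin m → A) (β β' : Fin ℓ → Fin n)
    (hβ : StrictMono β) (hβ' : StrictMono β') (γ γ' : Fin ℓ → Fin m) :
    ∫ ω, (∏ k : Fin ℓ, phi p (w (γ k)) (ξ (β k : ℕ) ω))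
        * (∏ k : Fin ℓ, phi p (w (γ' k)) (ξ (β' k : ℕ) ω)) ∂μ
      = if β = β' then
          ∏ k : Fin ℓ, ((if w (γ k) = w (γ' k) then (p (w (γ k)))⁻¹ else 0) - 1)
        else 0 := by
  classical
  set f : ℕ → A → ℝ := fun i x =>
    (∏ k ∈ Finset.univ.filter (fun k : Fin ℓ => (β k : ℕ) = i), phi p (w (γ k)) x)
      * (∏ k ∈ Finset.univ.filter (fun k : Fin ℓ => (β' k : ℕ) = i), phi p (w (γ' k)) x)
    with hfdef
  have hinj : Function.Injective (fun k : Fin ℓ => (β k : ℕ)) :=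
    fun i j h => hβ.injective (Fin.val_injective h)
  have hinj' : Function.Injective (fun k : Fin ℓ => (β' k : ℕ)) :=
    fun i j h => hβ'.injective (Fin.val_injective h)
  have fiber : ∀ (ω : Ω) (δ : Fin ℓ → Fin n) (ν : Fin ℓ → Fin m),
      Function.Injective (fun k : Fin ℓ => (δ k : ℕ)) →
      ∏ i ∈ Finset.range n, ∏ k ∈ Finset.univ.filter (fun k : Fin ℓ => (δ k : ℕ) = i),
        phi p (w (ν k)) (ξ i ω)
      = ∏ k : Fin ℓ, phi p (w (ν k)) (ξ (δ k : ℕ) ω) := by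
    intro ω δ ν _
    rw [← Finset.prod_fiberwise_of_maps_to
      (fun k _ => Finset.mem_range.mpr (δ k).isLt)
      (fun k => phi p (w (ν k)) (ξ (δ k : ℕ) ω))]
    refine Finset.prod_congr rfl fun i _ => Finset.prod_congr rfl fun k hk => ?_
    rw [Finset.mem_filter] at hk
    rw [hk.2]
  have stepA : ∀ ω, (∏ k : Fin ℓ, phi p (w (γ k)) (ξ (β k : ℕ) ω))
      * (∏ k : Fin ℓ, phi p (w (γ' k)) (ξ (β' k : ℕ) ω))
      = ∏ i ∈ Finset.range n, f i (ξ i ω) := by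
    intro ω
    simp only [hfdef]
    rw [Finset.prod_mul_distrib, fiber ω β γ hinj, fiber ω β' γ' hinj']
  rw [integral_congr_ae (ae_of_all _ stepA), integral_prod_comp hmeas hindep]
  by_cases h : β = β'
  · subst h
    rw [if_pos rfl]
    have hfib : ∀ k0 : Fin ℓ, Finset.univ.filter (fun k : Fin ℓ => (β k : ℕ) = (β k0 : ℕ))
        = {k0} := by
      intro k0
      ext k
      simp only [Finset.mem_filter, Finset.mem_univ, true_and, Finset.mem_singleton]
      exact ⟨fun hh => hinj hh, fun hh => by rw [hh]⟩
    have hval : ∀ k0 : Fin ℓ, ∫ ω, f (β k0 : ℕ) (ξ (β k0 : ℕ) ω) ∂μ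
        = (if w (γ k0) = w (γ' k0) then (p (w (γ k0)))⁻¹ else 0) - 1 := by
      intro k0
      have : ∀ x, f (β k0 : ℕ) x = phi p (w (γ k0)) x * phi p (w (γ' k0)) x := by
        intro x
        simp only [hfdef, hfib k0, Finset.prod_singleton]
      simp only [this]
      exact integral_phi_mul hmeas hp hsum hdist _ _ _
    have hout : ∀ i ∈ Finset.range n,
        i ∉ Finset.image (fun k : Fin ℓ => (β k : ℕ)) Finset.univ →
        ∫ ω, f i (ξ i ω) ∂μ = 1 := by
      intro i _ hi
      have hemp : Finset.univ.filter (fun k : Fin ℓ => (β k : ℕ) = i) = ∅ := by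
        rw [Finset.filter_eq_empty_iff]
        intro k _
        exact fun hh => hi (Finset.mem_image.mpr ⟨k, Finset.mem_univ k, hh⟩)
      have : ∀ x, f i x = 1 := by intro x; simp only [hfdef, hemp]; simp
      simp only [this]
      simp
    rw [← Finset.prod_subset
      (fun i hi => by
        rw [Finset.mem_image] at hi
        obtain ⟨k, _, rfl⟩ := hi
        exact Finset.mem_range.mpr (β k).isLt)
      hout,
      Finset.prod_image (fun k _ k' _ hh => hinj hh)]
    exact Finset.prod_congr rfl fun k0 _ => hval k0
  · rw [if_neg h]
    -- find i* in image β not in image β'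
    have him : Finset.image β Finset.univ ≠ Finset.image β' Finset.univ := by
      intro he
      exact h (strictMono_eq_of_image_eq hβ hβ' he)
    have hcards : (Finset.image β Finset.univ).card = (Finset.image β' Finset.univ).card := by
      rw [Finset.card_image_of_injective _ hβ.injective,
        Finset.card_image_of_injective _ hβ'.injective]
    have hnsub : ¬ Finset.image β Finset.univ ⊆ Finset.image β' Finset.univ := by
      intro hs
      exact him (Finset.eq_of_subset_of_card_le hs hcards.ge)
    obtain ⟨istar, histar, histar'⟩ := Finset.not_subset.mp hnsub
    obtain ⟨k0, _, rfl⟩ := Finset.mem_image.mp histar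
    refine Finset.prod_eq_zero (Finset.mem_range.mpr (β k0).isLt) ?_
    have hfib : Finset.univ.filter (fun k : Fin ℓ => (β k : ℕ) = ((β k0 : Fin n) : ℕ))
        = {k0} := by
      ext k
      simp only [Finset.mem_filter, Finset.mem_univ, true_and, Finset.mem_singleton]
      exact ⟨fun hh => hinj hh, fun hh => by rw [hh]⟩
    have hemp : Finset.univ.filter (fun k : Fin ℓ => (β' k : ℕ) = ((β k0 : Fin n) : ℕ))
        = ∅ := by
      rw [Finset.filter_eq_empty_iff]
      intro k _ hh
      exact histar' (Finset.mem_image.mpr ⟨k, Finset.mem_univ k,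
        Fin.val_injective hh⟩)
    have : ∀ x, f (β k0 : ℕ) x = phi p (w (γ k0)) x := by
      intro x
      simp only [hfdef, hfib, hemp, Finset.prod_singleton]
      simp
    simp only [this]
    exact integral_phi hmeas hp hsum hdist _ _

lemma corr_bound (hp : ∀ a, 0 < p a) (hsum : ∑ a, p a = 1) (a b : A) :
    |(if a = b then (p a)⁻¹ else 0) - 1|
      ≤ (Finset.univ.inf' Finset.univ_nonempty p)⁻¹ - 1 := by
  obtain ⟨a0, _, hq⟩ := Finset.exists_mem_eq_inf' Finset.univ_nonempty p
  have hq0 : 0 < Finset.univ.inf' Finset.univ_nonempty p := by rw [hq]; exact hp a0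
  have hqle : ∀ c : A, Finset.univ.inf' Finset.univ_nonempty p ≤ p c :=
    fun c => Finset.inf'_le _ (Finset.mem_univ c)
  have hple : ∀ c : A, p c ≤ 1 := by
    intro c
    have := Finset.single_le_sum (f := p) (fun x _ => (hp x).le) (Finset.mem_univ c)
    rw [hsum] at this; exact this
  have hinv : ∀ x y : ℝ, 0 < x → x ≤ y → y⁻¹ ≤ x⁻¹ := by
    intro x y hx hxy
    have := one_div_le_one_div_of_le hx hxy
    simpa [one_div] using this
  by_cases h : a = b
  · rw [if_pos h, abs_of_nonneg]
    · exact sub_le_sub_right (hinv _ _ hq0 (hqle a)) 1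
    · have : 1 ≤ (p a)⁻¹ := by simpa using hinv (p a) 1 (hp a) (hple a)
      linarith
  · rw [if_neg h]
    have hab : p a + p b ≤ 1 := by
      have h1 : p a + p b = ∑ x ∈ ({a, b} : Finset A), p x := (Finset.sum_pair h).symm
      have h2 : ∑ x ∈ ({a, b} : Finset A), p x ≤ ∑ x, p x :=
        Finset.sum_le_sum_of_subset_of_nonneg (Finset.subset_univ _)
          (fun x _ _ => (hp x).le)
      rw [hsum] at h2; linarith
    have h2q : 2 * Finset.univ.inf' Finset.univ_nonempty p ≤ 1 := by
      have := hqle a; have := hqle b; linarith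
    have h2 : 2 ≤ (Finset.univ.inf' Finset.univ_nonempty p)⁻¹ := by
      calc (2:ℝ) = 2 * Finset.univ.inf' Finset.univ_nonempty p
            * (Finset.univ.inf' Finset.univ_nonempty p)⁻¹ := by field_simp
        _ ≤ 1 * (Finset.univ.inf' Finset.univ_nonempty p)⁻¹ :=
            mul_le_mul_of_nonneg_right h2q (inv_nonneg.mpr hq0.le)
        _ = (Finset.univ.inf' Finset.univ_nonempty p)⁻¹ := one_mul _
    rw [show ((0:ℝ) - 1) = -1 by ring, abs_neg, abs_one]
    linarith

lemma integrable_FF (hmeas : ∀ i, Measurable (ξ i)) (hp : ∀ a, 0 < p a)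
    (n m ℓ : ℕ) (w : Fin m → A) (β β' : Fin ℓ → Fin n) (γ γ' : Fin ℓ → Fin m) :
    Integrable (fun ω => (∏ k : Fin ℓ, phi p (w (γ k)) (ξ (β k : ℕ) ω))
      * (∏ k : Fin ℓ, phi p (w (γ' k)) (ξ (β' k : ℕ) ω))) μ := by
  set Cb := Finset.univ.sup' Finset.univ_nonempty (fun a : A => (p a)⁻¹ + 1) with hCb
  have hphib : ∀ a x : A, |phi p a x| ≤ Cb := by
    intro a x
    have h0 : 0 ≤ (p a)⁻¹ := inv_nonneg.mpr (hp a).le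
    have h1 : |phi p a x| ≤ (p a)⁻¹ + 1 := by
      by_cases hx : x = a
      · rw [phi, if_pos hx, abs_le]; constructor <;> [linarith; linarith]
      · rw [phi, if_neg hx]
        rw [show (p a)⁻¹ * 0 - 1 = -1 by ring, abs_neg, abs_one]
        linarith
    exact h1.trans (Finset.le_sup' (fun a : A => (p a)⁻¹ + 1) (Finset.mem_univ a))
  have hprodb : ∀ (δ : Fin ℓ → Fin n) (ν : Fin ℓ → Fin m) (ω : Ω),
      |∏ k : Fin ℓ, phi p (w (ν k)) (ξ (δ k : ℕ) ω)| ≤ Cb ^ ℓ := by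
    intro δ ν ω
    rw [Finset.abs_prod]
    calc ∏ k : Fin ℓ, |phi p (w (ν k)) (ξ (δ k : ℕ) ω)|
        ≤ ∏ _k : Fin ℓ, Cb := Finset.prod_le_prod (fun _ _ => abs_nonneg _)
            (fun k _ => hphib _ _)
      _ = Cb ^ ℓ := by rw [Finset.prod_const, Finset.card_univ, Fintype.card_fin]
  have hmeasF : ∀ (δ : Fin ℓ → Fin n) (ν : Fin ℓ → Fin m),
      Measurable (fun ω => ∏ k : Fin ℓ, phi p (w (ν k)) (ξ (δ k : ℕ) ω)) :=
    fun δ ν => Finset.measurable_prod _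
      (fun k _ => (measurable_of_countable (phi p (w (ν k)))).comp (hmeas _))
  refine Integrable.mono' (integrable_const (Cb ^ ℓ * Cb ^ ℓ))
    ((hmeasF β γ).mul (hmeasF β' γ')).aestronglyMeasurable (ae_of_all _ fun ω => ?_)
  rw [Real.norm_eq_abs, abs_mul]
  have hC0 : (0:ℝ) ≤ Cb ^ ℓ := le_trans (abs_nonneg _) (hprodb β γ ω)
  exact mul_le_mul (hprodb β γ ω) (hprodb β' γ' ω) (abs_nonneg _) hC0

end Prob
end AuxProb

/-- Lemma 3.2: `σ_ℓ² := E[V_ℓ²] ≤ B^ℓ C(n,ℓ) C(n-ℓ,m-ℓ)²`,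
where `B = (min_a p_a)⁻¹ - 1`. -/
theorem Vell_variance_upper_bound {A : Type*} [Fintype A] [DecidableEq A] [Nonempty A]
    [MeasurableSpace A] [MeasurableSingletonClass A]
    (p : A → ℝ) (hp : ∀ a, 0 < p a) (hsum : ∑ a, p a = 1)
    {Ω : Type*} [MeasurableSpace Ω] (μ : Measure Ω) [IsProbabilityMeasure μ]
    (ξ : ℕ → Ω → A) (hmeas : ∀ i, Measurable (ξ i))
    (hindep : iIndepFun ξ μ)
    (hdist : ∀ i a, μ {ω | ξ i ω = a} = ENNReal.ofReal (p a))
    (n m ℓ : ℕ) (w : Fin m → A) (hmn : m ≤ n) (hl1 : 1 ≤ ℓ) (hlm : ℓ ≤ m) :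
    ∫ ω, (Vell p n m w ξ ℓ ω) ^ 2 ∂μ
      ≤ ((Finset.univ.inf' Finset.univ_nonempty p)⁻¹ - 1) ^ ℓ
          * (n.choose ℓ : ℝ) * ((n - ℓ).choose (m - ℓ) : ℝ) ^ 2 := by
    classical
  have hsm : ∀ β ∈ Finset.univ.filter
      (fun β : Fin ℓ → Fin n => ∀ i j : Fin ℓ, i < j → β i < β j), StrictMono β :=
    fun β hβ i j hij => (Finset.mem_filter.mp hβ).2 i j hij
  have hsmT : ∀ γ ∈ Finset.univ.filter
      (fun γ : Fin ℓ → Fin m => ∀ i j : Fin ℓ, i < j → γ i < γ j),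
      ∀ i j : Fin ℓ, i < j → γ i < γ j :=
    fun γ hγ => (Finset.mem_filter.mp hγ).2
  have hB0 : 0 ≤ (Finset.univ.inf' Finset.univ_nonempty p)⁻¹ - 1 := by
    have := corr_bound hp hsum (Classical.arbitrary A) (Classical.arbitrary A)
    exact le_trans (abs_nonneg _) this
  have hVV : ∀ ω : Ω, (Vell p n m w ξ ℓ ω)^2
      = ∑ β ∈ Finset.univ.filter
            (fun β : Fin ℓ → Fin n => ∀ i j : Fin ℓ, i < j → β i < β j),
          ∑ β' ∈ Finset.univ.filter
            (fun β : Fin ℓ → Fin n => ∀ i j : Fin ℓ, i < j → β i < β j),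
          ∑ γ ∈ Finset.univ.filter
            (fun γ : Fin ℓ → Fin m => ∀ i j : Fin ℓ, i < j → γ i < γ j),
          ∑ γ' ∈ Finset.univ.filter
            (fun γ : Fin ℓ → Fin m => ∀ i j : Fin ℓ, i < j → γ i < γ j),
          ((gapCoeff n m ℓ β γ : ℝ) * (gapCoeff n m ℓ β' γ' : ℝ))
            * ((∏ k : Fin ℓ, phi p (w (γ k)) (ξ (β k : ℕ) ω))
               * (∏ k : Fin ℓ, phi p (w (γ' k)) (ξ (β' k : ℕ) ω))) := by
    intro ω
    rw [sq, Vell, Finset.sum_mul_sum]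
    refine Finset.sum_congr rfl fun β _ => Finset.sum_congr rfl fun β' _ => ?_
    rw [Finset.sum_mul_sum]
    refine Finset.sum_congr rfl fun γ _ => Finset.sum_congr rfl fun γ' _ => ?_
    ring
  have hintFF : ∀ (β β' : Fin ℓ → Fin n) (γ γ' : Fin ℓ → Fin m),
      Integrable (fun ω => ((gapCoeff n m ℓ β γ : ℝ) * (gapCoeff n m ℓ β' γ' : ℝ))
        * ((∏ k : Fin ℓ, phi p (w (γ k)) (ξ (β k : ℕ) ω))
           * (∏ k : Fin ℓ, phi p (w (γ' k)) (ξ (β' k : ℕ) ω)))) μ :=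
    fun β β' γ γ' => (integrable_FF hmeas hp n m ℓ w β β' γ γ').const_mul _
  calc ∫ ω, (Vell p n m w ξ ℓ ω) ^ 2 ∂μ
      = ∑ β ∈ Finset.univ.filter
            (fun β : Fin ℓ → Fin n => ∀ i j : Fin ℓ, i < j → β i < β j),
        ∑ β' ∈ Finset.univ.filter
            (fun β : Fin ℓ → Fin n => ∀ i j : Fin ℓ, i < j → β i < β j),
        ∑ γ ∈ Finset.univ.filter
            (fun γ : Fin ℓ → Fin m => ∀ i j : Fin ℓ, i < j → γ i < γ j),
        ∑ γ' ∈ Finset.univ.filter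
            (fun γ : Fin ℓ → Fin m => ∀ i j : Fin ℓ, i < j → γ i < γ j),
          ((gapCoeff n m ℓ β γ : ℝ) * (gapCoeff n m ℓ β' γ' : ℝ))
            * ∫ ω, (∏ k : Fin ℓ, phi p (w (γ k)) (ξ (β k : ℕ) ω))
               * (∏ k : Fin ℓ, phi p (w (γ' k)) (ξ (β' k : ℕ) ω)) ∂μ := by
        rw [integral_congr_ae (ae_of_all _ hVV),
          integral_finset_sum _ (fun β _ => integrable_finset_sum _
            (fun β' _ => integrable_finset_sum _ (fun γ _ => integrable_finset_sum _
              (fun γ' _ => hintFF β β' γ γ'))))]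
        refine Finset.sum_congr rfl fun β _ => ?_
        rw [integral_finset_sum _ (fun β' _ => integrable_finset_sum _
          (fun γ _ => integrable_finset_sum _ (fun γ' _ => hintFF β β' γ γ')))]
        refine Finset.sum_congr rfl fun β' _ => ?_
        rw [integral_finset_sum _ (fun γ _ => integrable_finset_sum _
          (fun γ' _ => hintFF β β' γ γ'))]
        refine Finset.sum_congr rfl fun γ _ => ?_
        rw [integral_finset_sum _ (fun γ' _ => hintFF β β' γ γ')]
        exact Finset.sum_congr rfl fun γ' _ => integral_const_mul _ _
    _ = ∑ β ∈ Finset.univ.filter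
            (fun β : Fin ℓ → Fin n => ∀ i j : Fin ℓ, i < j → β i < β j),
        ∑ γ ∈ Finset.univ.filter
            (fun γ : Fin ℓ → Fin m => ∀ i j : Fin ℓ, i < j → γ i < γ j),
        ∑ γ' ∈ Finset.univ.filter
            (fun γ : Fin ℓ → Fin m => ∀ i j : Fin ℓ, i < j → γ i < γ j),
          ((gapCoeff n m ℓ β γ : ℝ) * (gapCoeff n m ℓ β γ' : ℝ))
            * ∏ k : Fin ℓ,
              ((if w (γ k) = w (γ' k) then (p (w (γ k)))⁻¹ else 0) - 1) := by
        refine Finset.sum_congr rfl fun β hβ => ?_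
        rw [Finset.sum_eq_single_of_mem β hβ ?_]
        · refine Finset.sum_congr rfl fun γ _ => Finset.sum_congr rfl fun γ' _ => ?_
          rw [integral_FF hmeas hp hsum hindep hdist n m ℓ w β β
            (hsm β hβ) (hsm β hβ) γ γ', if_pos rfl]
        · intro β' hβ' hne
          refine Finset.sum_eq_zero fun γ _ => Finset.sum_eq_zero fun γ' _ => ?_
          rw [integral_FF hmeas hp hsum hindep hdist n m ℓ w β β'
            (hsm β hβ) (hsm β' hβ') γ γ', if_neg (fun he => hne he.symm), mul_zero]
    _ ≤ ∑ _β ∈ Finset.univ.filter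
            (fun β : Fin ℓ → Fin n => ∀ i j : Fin ℓ, i < j → β i < β j),
          ((n - ℓ).choose (m - ℓ) : ℝ)^2
            * ((Finset.univ.inf' Finset.univ_nonempty p)⁻¹ - 1)^ℓ := by
        refine Finset.sum_le_sum fun β hβ => ?_
        have hPe : ∀ γ γ' : Fin ℓ → Fin m,
            |∏ k : Fin ℓ, ((if w (γ k) = w (γ' k) then (p (w (γ k)))⁻¹ else 0) - 1)|
              ≤ ((Finset.univ.inf' Finset.univ_nonempty p)⁻¹ - 1)^ℓ := by
          intro γ γ'
          rw [Finset.abs_prod]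
          calc ∏ k : Fin ℓ, |(if w (γ k) = w (γ' k) then (p (w (γ k)))⁻¹ else 0) - 1|
              ≤ ∏ _k : Fin ℓ, ((Finset.univ.inf' Finset.univ_nonempty p)⁻¹ - 1) :=
                Finset.prod_le_prod (fun _ _ => abs_nonneg _)
                  (fun k _ => corr_bound hp hsum _ _)
            _ = ((Finset.univ.inf' Finset.univ_nonempty p)⁻¹ - 1)^ℓ := by
                rw [Finset.prod_const, Finset.card_univ, Fintype.card_fin]
        have hstep1 : ∑ γ ∈ Finset.univ.filter
              (fun γ : Fin ℓ → Fin m => ∀ i j : Fin ℓ, i < j → γ i < γ j),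
            ∑ γ' ∈ Finset.univ.filter
              (fun γ : Fin ℓ → Fin m => ∀ i j : Fin ℓ, i < j → γ i < γ j),
            ((gapCoeff n m ℓ β γ : ℝ) * (gapCoeff n m ℓ β γ' : ℝ))
              * ∏ k : Fin ℓ,
                ((if w (γ k) = w (γ' k) then (p (w (γ k)))⁻¹ else 0) - 1)
            ≤ ∑ γ ∈ Finset.univ.filter
              (fun γ : Fin ℓ → Fin m => ∀ i j : Fin ℓ, i < j → γ i < γ j),
            ∑ γ' ∈ Finset.univ.filter
              (fun γ : Fin ℓ → Fin m => ∀ i j : Fin ℓ, i < j → γ i < γ j),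
            ((gapCoeff n m ℓ β γ : ℝ) * (gapCoeff n m ℓ β γ' : ℝ))
              * ((Finset.univ.inf' Finset.univ_nonempty p)⁻¹ - 1)^ℓ := by
          refine Finset.sum_le_sum fun γ _ => Finset.sum_le_sum fun γ' _ => ?_
          exact mul_le_mul_of_nonneg_left
            (le_trans (le_abs_self _) (hPe γ γ'))
            (by positivity)
        refine le_trans hstep1 ?_
        have hcsum : ∑ γ ∈ Finset.univ.filter
              (fun γ : Fin ℓ → Fin m => ∀ i j : Fin ℓ, i < j → γ i < γ j),
            (gapCoeff n m ℓ β γ : ℝ) ≤ ((n - ℓ).choose (m - ℓ) : ℝ) := by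
          rw [← Nat.cast_sum]
          exact Nat.cast_le.mpr (sum_gapCoeff_le n m ℓ hlm hmn β (hsm β hβ))
        have hcnn : 0 ≤ ∑ γ ∈ Finset.univ.filter
              (fun γ : Fin ℓ → Fin m => ∀ i j : Fin ℓ, i < j → γ i < γ j),
            (gapCoeff n m ℓ β γ : ℝ) :=
          Finset.sum_nonneg fun γ _ => Nat.cast_nonneg _
        have hfold : ∑ γ ∈ Finset.univ.filter
              (fun γ : Fin ℓ → Fin m => ∀ i j : Fin ℓ, i < j → γ i < γ j),
            ∑ γ' ∈ Finset.univ.filter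
              (fun γ : Fin ℓ → Fin m => ∀ i j : Fin ℓ, i < j → γ i < γ j),
            ((gapCoeff n m ℓ β γ : ℝ) * (gapCoeff n m ℓ β γ' : ℝ))
              * ((Finset.univ.inf' Finset.univ_nonempty p)⁻¹ - 1)^ℓ
            = (∑ γ ∈ Finset.univ.filter
              (fun γ : Fin ℓ → Fin m => ∀ i j : Fin ℓ, i < j → γ i < γ j),
            (gapCoeff n m ℓ β γ : ℝ))
              * (∑ γ' ∈ Finset.univ.filter
              (fun γ : Fin ℓ → Fin m => ∀ i j : Fin ℓ, i < j → γ i < γ j),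
            (gapCoeff n m ℓ β γ' : ℝ))
              * ((Finset.univ.inf' Finset.univ_nonempty p)⁻¹ - 1)^ℓ := by
          rw [Finset.sum_mul_sum, Finset.sum_mul]
          refine Finset.sum_congr rfl fun γ _ => ?_
          rw [Finset.sum_mul]
        rw [hfold]
        have hCnn : (0:ℝ) ≤ ((n - ℓ).choose (m - ℓ) : ℝ) := Nat.cast_nonneg _
        calc (∑ γ ∈ Finset.univ.filter
              (fun γ : Fin ℓ → Fin m => ∀ i j : Fin ℓ, i < j → γ i < γ j),
            (gapCoeff n m ℓ β γ : ℝ))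
              * (∑ γ' ∈ Finset.univ.filter
              (fun γ : Fin ℓ → Fin m => ∀ i j : Fin ℓ, i < j → γ i < γ j),
            (gapCoeff n m ℓ β γ' : ℝ))
              * ((Finset.univ.inf' Finset.univ_nonempty p)⁻¹ - 1)^ℓ
            ≤ (((n - ℓ).choose (m - ℓ) : ℝ) * ((n - ℓ).choose (m - ℓ) : ℝ))
              * ((Finset.univ.inf' Finset.univ_nonempty p)⁻¹ - 1)^ℓ := by
              refine mul_le_mul_of_nonneg_right ?_ (pow_nonneg hB0 ℓ)
              exact mul_le_mul hcsum hcsum hcnn hCnn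
          _ = ((n - ℓ).choose (m - ℓ) : ℝ)^2
              * ((Finset.univ.inf' Finset.univ_nonempty p)⁻¹ - 1)^ℓ := by ring
    _ ≤ ((Finset.univ.inf' Finset.univ_nonempty p)⁻¹ - 1) ^ ℓ
          * (n.choose ℓ : ℝ) * ((n - ℓ).choose (m - ℓ) : ℝ) ^ 2 := by
        rw [Finset.sum_const, nsmul_eq_mul]
        have h1 : ((Finset.univ.filter
            (fun β : Fin ℓ → Fin n => ∀ i j : Fin ℓ, i < j → β i < β j)).card : ℝ)
            ≤ (n.choose ℓ : ℝ) := Nat.cast_le.mpr (card_strictMono_le n ℓ)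
        have h2 : (0:ℝ) ≤ ((n - ℓ).choose (m - ℓ) : ℝ)^2
            * ((Finset.univ.inf' Finset.univ_nonempty p)⁻¹ - 1)^ℓ :=
          mul_nonneg (by positivity) (pow_nonneg hB0 ℓ)
        calc (((Finset.univ.filter
            (fun β : Fin ℓ → Fin n => ∀ i j : Fin ℓ, i < j → β i < β j)).card : ℝ))
              * (((n - ℓ).choose (m - ℓ) : ℝ)^2
                * ((Finset.univ.inf' Finset.univ_nonempty p)⁻¹ - 1)^ℓ)
            ≤ (n.choose ℓ : ℝ) * (((n - ℓ).choose (m - ℓ) : ℝ)^2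
                * ((Finset.univ.inf' Finset.univ_nonempty p)⁻¹ - 1)^ℓ) :=
              mul_le_mul_of_nonneg_right h1 h2
          _ = ((Finset.univ.inf' Finset.univ_nonempty p)⁻¹ - 1) ^ ℓ
              * (n.choose ℓ : ℝ) * ((n - ℓ).choose (m - ℓ) : ℝ) ^ 2 := by ring
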